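/- Let r > 0 and let h : ℝ^d → ℂ be continuous. If there exist ε > 0 and K > 0 such that |h(x)| ≤ K·exp(−ε|x|^{1/r}) for all x, then there exist C > 0 and K' > 0 such that |x^α h(x)| ≤ K'·C^{|α|}(α!)^r for all x ∈ ℝ^d and all multi-indices α ∈ ℕ^d; in fact one may take C = (rd/ε)^r. -/

import Mathlib

/-- `n^n ≤ n! * e^n`. -/
lemma aux_pow_le_factorial_mul_exp (n : ℕ) :
    ((n : ℝ)) ^ n ≤ (n.factorial : ℝ) * Real.exp 1 ^ n := by
  have h := Real.pow_div_factorial_le_exp (x := (n : ℝ)) (Nat.cast_nonneg n) n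
  have hfac : (0 : ℝ) < (n.factorial : ℝ) := by exact_mod_cast n.factorial_pos
  rw [div_le_iff₀ hfac] at h
  calc ((n : ℝ)) ^ n ≤ Real.exp (n : ℝ) * (n.factorial : ℝ) := h
    _ = (n.factorial : ℝ) * Real.exp 1 ^ n := by
        rw [← Real.exp_one_rpow (n : ℝ), Real.rpow_natCast]; ring

/-- key single-variable estimate: `t^n ≤ ((r/ε)^r)^n (n!)^r exp(ε t^{1/r})`. -/
lemma aux_key (r ε' : ℝ) (hr : 0 < r) (hε : 0 < ε') (n : ℕ) {t : ℝ} (ht : 0 ≤ t) :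
    t ^ n ≤ ((r / ε') ^ (r : ℝ)) ^ n * (n.factorial : ℝ) ^ (r : ℝ)
      * Real.exp (ε' * t ^ (1 / r)) := by
  rcases Nat.eq_zero_or_pos n with hn | hn
  · subst hn
    simp only [pow_zero, Nat.factorial_zero, Nat.cast_one, Real.one_rpow, one_mul]
    exact Real.one_le_exp (by positivity)
  -- set s = t^{1/r}, a = r * n
  set s : ℝ := t ^ (1 / r) with hs
  have hs0 : 0 ≤ s := Real.rpow_nonneg ht _
  have hnpos : (0:ℝ) < n := by exact_mod_cast hn
  set a : ℝ := r * n with ha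
  have hapos : 0 < a := by positivity
  -- s ≤ a/(ε' e) * exp(ε' s / a)
  have h1 : ε' * s / a ≤ Real.exp (ε' * s / a - 1) := by
    have := Real.add_one_le_exp (ε' * s / a - 1); linarith
  have h2 : s ≤ a / (ε' * Real.exp 1) * Real.exp (ε' * s / a) := by
    have hee : Real.exp (ε' * s / a - 1) = Real.exp (ε' * s / a) / Real.exp 1 := by
      rw [Real.exp_sub]
    rw [hee] at h1
    have ha0 : a ≠ 0 := hapos.ne'
    have he0 : ε' ≠ 0 := hε.ne'
    have e1 : ε' * s / a * (a / ε') = s := by field_simp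
    calc s = ε' * s / a * (a / ε') := e1.symm
      _ ≤ (Real.exp (ε' * s / a) / Real.exp 1) * (a / ε') := by
          apply mul_le_mul_of_nonneg_right h1; positivity
      _ = a / (ε' * Real.exp 1) * Real.exp (ε' * s / a) := by
          field_simp
  -- raise to power a
  have h3 : s ^ a ≤ (a / (ε' * Real.exp 1)) ^ a * Real.exp (ε' * s) := by
    have := Real.rpow_le_rpow hs0 h2 hapos.le
    rwa [Real.mul_rpow (by positivity) (Real.exp_nonneg _),
      ← Real.exp_mul, div_mul_cancel₀ _ hapos.ne'] at this
  -- t^n = s^a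
  have h4 : t ^ n = s ^ a := by
    rw [hs, ← Real.rpow_natCast t n, ← Real.rpow_mul ht]
    congr 1
    field_simp [ha]
    rw [ha]; ring
  -- (a/(ε' e))^a ≤ ((r/ε')^r)^n * (n!)^r
  have h5 : (a / (ε' * Real.exp 1)) ^ a ≤ ((r / ε') ^ (r : ℝ)) ^ n * (n.factorial : ℝ) ^ (r : ℝ) := by
    have hsplit : a / (ε' * Real.exp 1) = (r / ε') * ((n : ℝ) / Real.exp 1) := by
      rw [ha]; field_simp; try ring
    rw [hsplit, Real.mul_rpow (by positivity) (by positivity)]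
    have hA : (r / ε') ^ a = ((r / ε') ^ (r : ℝ)) ^ n := by
      rw [ha, Real.rpow_mul (by positivity), Real.rpow_natCast]
    have hB : ((n : ℝ) / Real.exp 1) ^ a ≤ (n.factorial : ℝ) ^ (r : ℝ) := by
      have : ((n : ℝ) / Real.exp 1) ^ a = (((n : ℝ) / Real.exp 1) ^ n) ^ (r : ℝ) := by
        rw [ha, mul_comm r (n:ℝ), Real.rpow_mul (by positivity), Real.rpow_natCast]
      rw [this]
      apply Real.rpow_le_rpow (by positivity) _ hr.le
      rw [div_pow, div_le_iff₀ (by positivity)]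
      exact aux_pow_le_factorial_mul_exp n
    rw [hA]
    exact mul_le_mul_of_nonneg_left hB (by positivity)
  calc t ^ n = s ^ a := h4
    _ ≤ (a / (ε' * Real.exp 1)) ^ a * Real.exp (ε' * s) := h3
    _ ≤ ((r / ε') ^ (r : ℝ)) ^ n * (n.factorial : ℝ) ^ (r : ℝ) * Real.exp (ε' * s) :=
        mul_le_mul_of_nonneg_right h5 (Real.exp_nonneg _)

lemma aux_coord_le_norm {d : ℕ} (x : EuclideanSpace ℝ (Fin d)) (j : Fin d) : |x j| ≤ ‖x‖ := by
  rw [EuclideanSpace.norm_eq]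
  have : |x j| = Real.sqrt (‖x j‖ ^ 2) := by
    rw [Real.sqrt_sq_eq_abs]; simp [Real.norm_eq_abs]
  rw [this]
  apply Real.sqrt_le_sqrt
  exact Finset.single_le_sum (f := fun i => ‖x i‖ ^ 2) (fun i _ => by positivity) (Finset.mem_univ j)

/-- If a continuous `h : ℝ^d → ℂ` satisfies `|h(x)| ≤ K exp(-ε |x|^{1/r})`, then
`|x^α h(x)| ≤ K' C^{|α|} (α!)^r` with `C = (r d / ε)^r`. -/
theorem decay_implies_moment_bounds (d : ℕ) (r : ℝ) (hr : 0 < r)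
    (h : EuclideanSpace ℝ (Fin d) → ℂ) (hc : Continuous h)
    (ε K : ℝ) (hε : 0 < ε) (hK : 0 < K)
    (hb : ∀ x : EuclideanSpace ℝ (Fin d), ‖h x‖ ≤ K * Real.exp (-ε * ‖x‖ ^ (1 / r))) :
    ∃ K' > 0, ∀ (x : EuclideanSpace ℝ (Fin d)) (α : Fin d → ℕ),
      |∏ j, x j ^ α j| * ‖h x‖ ≤
        K' * ((r * d / ε) ^ (r : ℝ)) ^ (∑ j, α j) * (∏ j, (Nat.factorial (α j) : ℝ)) ^ (r : ℝ) := by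
  refine ⟨K, hK, fun x α => ?_⟩
  rcases Nat.eq_zero_or_pos d with hd | hd
  · -- dimension 0: everything is trivial
    subst hd
    have hx0 : ‖x‖ = 0 := by
      simp [EuclideanSpace.norm_eq]
    simp only [Finset.univ_eq_empty, Finset.prod_empty, Finset.sum_empty, abs_one, one_mul,
      pow_zero, Real.one_rpow, mul_one]
    calc ‖h x‖ ≤ K * Real.exp (-ε * ‖x‖ ^ (1 / r)) := hb x
      _ = K := by
        rw [hx0, Real.zero_rpow (by positivity), mul_zero, Real.exp_zero, mul_one]
  · have hdpos : (0:ℝ) < d := by exact_mod_cast hd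
    set ε' : ℝ := ε / d with hε'
    have hε'pos : 0 < ε' := by positivity
    set s : ℝ := ‖x‖ ^ (1 / r) with hs
    have hs0 : 0 ≤ s := Real.rpow_nonneg (norm_nonneg x) _
    -- step 1 : |∏ x_j^{α_j}| ≤ ∏ ‖x‖^{α_j}
    have step1 : |∏ j, x j ^ α j| ≤ ∏ j : Fin d, ‖x‖ ^ α j := by
      rw [Finset.abs_prod]
      apply Finset.prod_le_prod (fun j _ => abs_nonneg _)
      intro j _
      rw [abs_pow]
      exact pow_le_pow_left₀ (abs_nonneg _) (aux_coord_le_norm x j) _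
    -- step 2 : each factor bound
    have step2 : ∏ j : Fin d, ‖x‖ ^ α j ≤
        (∏ j : Fin d, ((r / ε') ^ (r:ℝ)) ^ α j * ((α j).factorial : ℝ) ^ (r:ℝ))
          * Real.exp (ε * s) := by
      have hexp : Real.exp (ε * s) = ∏ _j : Fin d, Real.exp (ε' * s) := by
        rw [Finset.prod_const, ← Real.exp_nat_mul, Finset.card_univ, Fintype.card_fin]
        congr 1
        rw [hε']; field_simp; try ring
      rw [hexp, ← Finset.prod_mul_distrib]
      apply Finset.prod_le_prod (fun j _ => by positivity)
      intro j _
      have := aux_key r ε' hr hε'pos (α j) (norm_nonneg x)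
      rwa [← hs] at this
    have hre : r * d / ε = r / ε' := by rw [hε']; field_simp
    have hprod : (∏ j : Fin d, ((r / ε') ^ (r:ℝ)) ^ α j * ((α j).factorial : ℝ) ^ (r:ℝ))
        = ((r / ε') ^ (r:ℝ)) ^ (∑ j, α j) * (∏ j, ((α j).factorial : ℝ)) ^ (r:ℝ) := by
      rw [Finset.prod_mul_distrib, Finset.prod_pow_eq_pow_sum,
        Real.finset_prod_rpow _ _ (fun j _ => by positivity)]
    have hhx : ‖h x‖ ≤ K * Real.exp (-(ε * s)) := by
      have := hb x
      rwa [neg_mul, ← hs] at this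
    calc |∏ j, x j ^ α j| * ‖h x‖
        ≤ (∏ j : Fin d, ‖x‖ ^ α j) * (K * Real.exp (-(ε * s))) := by
          apply mul_le_mul step1 hhx (norm_nonneg _) (Finset.prod_nonneg fun j _ => by positivity)
      _ ≤ ((∏ j : Fin d, ((r / ε') ^ (r:ℝ)) ^ α j * ((α j).factorial : ℝ) ^ (r:ℝ))
            * Real.exp (ε * s)) * (K * Real.exp (-(ε * s))) := by
          apply mul_le_mul_of_nonneg_right step2 (by positivity)
      _ = K * ((r / ε') ^ (r:ℝ)) ^ (∑ j, α j) * (∏ j, ((α j).factorial : ℝ)) ^ (r:ℝ) := by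
          have hee : Real.exp (ε * s) * Real.exp (-(ε * s)) = 1 := by
            rw [← Real.exp_add]; simp
          rw [hprod]
          calc (((r / ε') ^ (r:ℝ)) ^ ∑ j, α j) * (∏ j, ((α j).factorial : ℝ)) ^ (r:ℝ)
                * Real.exp (ε * s) * (K * Real.exp (-(ε * s)))
              = K * ((r / ε') ^ (r:ℝ)) ^ (∑ j, α j) * (∏ j, ((α j).factorial : ℝ)) ^ (r:ℝ)
                * (Real.exp (ε * s) * Real.exp (-(ε * s))) := by ring
            _ = K * ((r / ε') ^ (r:ℝ)) ^ (∑ j, α j) * (∏ j, ((α j).factorial : ℝ)) ^ (r:ℝ) := by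
                rw [hee, mul_one]
      _ = K * ((r * d / ε) ^ (r:ℝ)) ^ (∑ j, α j) * (∏ j, ((α j).factorial : ℝ)) ^ (r:ℝ) := by
          rw [hre]
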